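/- Let K be an algebraically closed field of characteristic p ≥ 0, let g ≥ 1 and s ≥ 0 be integers, and let μ_1,…,μ_s be integers with each μ_j ≥ 2. Let Γ be the group with presentation ⟨x_1,…,x_g, y_1,…,y_g, γ_1,…,γ_s | (∏_{i=1}^{g}[x_i,y_i])·γ_1⋯γ_s = 1, γ_j^{μ_j} = 1 for 1 ≤ j ≤ s⟩. Let ρ : Γ → K^× be a group homomorphism that is not the trivial character, set λ_j = ρ(γ_j), and let ℓ be the number of indices j with λ_j = 1 and p ∤ μ_j. Then dim_K H^1(Γ, K_ρ) = 2g + s − 2 − ℓ. -/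

import Mathlib

open scoped commutatorElement

/-- Relations presenting the orbifold group of a closed genus-`g` surface with `s`
marked points of multiplicities `μ_j`: the surface relation
`(∏ i, [x_i, y_i]) · γ_1 ⋯ γ_s = 1` together with `γ_j ^ μ_j = 1` for all `j`.
The generator `Sum.inl (Sum.inl i)` is `x_i`, `Sum.inl (Sum.inr i)` is `y_i`, and
`Sum.inr j` is `γ_j`. -/
def surfRels (g s : ℕ) (μ : Fin s → ℕ) : Set (FreeGroup ((Fin g ⊕ Fin g) ⊕ Fin s)) :=
  (Set.range fun j : Fin s => FreeGroup.of (Sum.inr j) ^ μ j) ∪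
    {(List.ofFn fun i : Fin g =>
        ⁅FreeGroup.of (Sum.inl (Sum.inl i) : (Fin g ⊕ Fin g) ⊕ Fin s),
          FreeGroup.of (Sum.inl (Sum.inr i) : (Fin g ⊕ Fin g) ⊕ Fin s)⁆).prod *
      (List.ofFn fun j : Fin s => FreeGroup.of (Sum.inr j : (Fin g ⊕ Fin g) ⊕ Fin s)).prod}

/-- The orbifold group
`Γ = ⟨x_1,…,x_g, y_1,…,y_g, γ_1,…,γ_s ∣ (∏ i [x_i,y_i])·γ_1⋯γ_s = 1, γ_j^{μ_j} = 1⟩`. -/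
abbrev SurfOrbGroup (g s : ℕ) (μ : Fin s → ℕ) : Type := PresentedGroup (surfRels g s μ)

/-- The generator `γ_j` of `Γ`. -/
def surfGamma (g s : ℕ) (μ : Fin s → ℕ) (j : Fin s) : SurfOrbGroup g s μ :=
  PresentedGroup.of (Sum.inr j)

/-- The one-dimensional representation `K_ρ` attached to a character `ρ : G → Kˣ`:
`g ∈ G` acts on `K` by multiplication by `ρ g`. -/
def charRep {K : Type} [CommRing K] {G : Type} [Group G] (ρ : G →* Kˣ) :
    Representation K G K where
  toFun g := (ρ g : K) • (1 : K →ₗ[K] K)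
  map_one' := by simp
  map_mul' g h := by
    ext
    simp [mul_smul, mul_comm]

/-! ### Auxiliary development -/

set_option linter.unnecessarySeqFocus false
set_option maxHeartbeats 1000000
set_option synthInstance.maxHeartbeats 400000

/-- The affine group of the line over `K`: pairs `(a, u)` acting as `x ↦ u x + a`. -/
structure Aff (K : Type) [Field K] where
  a : K
  u : Kˣ

namespace Aff

variable {K : Type} [Field K]

@[ext] lemma ext' {p q : Aff K} (h1 : p.a = q.a) (h2 : p.u = q.u) : p = q := by
  cases p; cases q; simp_all

instance : Mul (Aff K) := ⟨fun p q => ⟨p.a + (p.u : K) * q.a, p.u * q.u⟩⟩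
instance : One (Aff K) := ⟨⟨0, 1⟩⟩
instance : Inv (Aff K) := ⟨fun p => ⟨-(((p.u⁻¹ : Kˣ) : K) * p.a), p.u⁻¹⟩⟩

@[simp] lemma mul_a (p q : Aff K) : (p * q).a = p.a + (p.u : K) * q.a := rfl
@[simp] lemma mul_u (p q : Aff K) : (p * q).u = p.u * q.u := rfl
@[simp] lemma one_a : (1 : Aff K).a = 0 := rfl
@[simp] lemma one_u : (1 : Aff K).u = 1 := rfl
@[simp] lemma inv_a (p : Aff K) : (p⁻¹).a = -(((p.u⁻¹ : Kˣ) : K) * p.a) := rfl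
@[simp] lemma inv_u (p : Aff K) : (p⁻¹).u = p.u⁻¹ := rfl

instance : Group (Aff K) where
  mul_assoc p q r := by apply ext' <;> simp [Units.val_mul, mul_assoc] <;> ring
  one_mul p := by apply ext' <;> simp
  mul_one p := by apply ext' <;> simp
  inv_mul_cancel p := by
    apply ext' <;> simp [Units.val_mul]

/-- Second projection as a group hom. -/
def sndHom : Aff K →* Kˣ where
  toFun p := p.u
  map_one' := rfl
  map_mul' _ _ := rfl

@[simp] lemma sndHom_apply (p : Aff K) : sndHom p = p.u := rfl

end Aff

section Tval

variable {K : Type} [Field K] {ι : Type} (r : ι → Kˣ)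

/-- The homomorphism from the free group determined by values `v` and units `r`. -/
noncomputable def Fhom (v : ι → K) : FreeGroup ι →* Aff K :=
  FreeGroup.lift fun k => ⟨v k, r k⟩

@[simp] lemma Fhom_of (v : ι → K) (k : ι) : Fhom r v (FreeGroup.of k) = ⟨v k, r k⟩ :=
  FreeGroup.lift_apply_of

lemma Fhom_u (v : ι → K) (w : FreeGroup ι) :
    (Fhom r v w).u = FreeGroup.lift r w := by
  have : (Aff.sndHom.comp (Fhom r v)) w = FreeGroup.lift r w :=
    FreeGroup.lift_unique _ (fun x => by simp [Fhom])
  simpa using this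

/-- The "Fox derivative pairing": the translation part of `Fhom r v w`. -/
noncomputable def Tval (w : FreeGroup ι) (v : ι → K) : K := (Fhom r v w).a

@[simp] lemma Tval_one (v : ι → K) : Tval r 1 v = 0 := by
  simp [Tval]

@[simp] lemma Tval_of (v : ι → K) (k : ι) : Tval r (FreeGroup.of k) v = v k := by
  simp [Tval]

lemma Tval_mul (v : ι → K) (w w' : FreeGroup ι) :
    Tval r (w * w') v = Tval r w v + (FreeGroup.lift r w : K) * Tval r w' v := by
  simp [Tval, Fhom_u]

lemma Tval_inv (v : ι → K) (w : FreeGroup ι) :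
    Tval r w⁻¹ v = -((((FreeGroup.lift r w)⁻¹ : Kˣ) : K) * Tval r w v) := by
  simp [Tval, Fhom_u]

lemma Tval_add (w : FreeGroup ι) (v v' : ι → K) :
    Tval r w (v + v') = Tval r w v + Tval r w v' := by
  induction w using FreeGroup.induction_on with
  | C1 => simp
  | of k => simp
  | inv_of k _ =>
      simp only [Tval_inv, Tval_of]
      simp [Pi.add_apply, mul_add]; ring
  | mul x y hx hy => simp only [Tval_mul, hx, hy]; ring

lemma Tval_smul (w : FreeGroup ι) (c : K) (v : ι → K) :
    Tval r w (c • v) = c * Tval r w v := by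
  induction w using FreeGroup.induction_on with
  | C1 => simp
  | of k => simp
  | inv_of k _ =>
      simp only [Tval_inv, Tval_of]
      simp [Pi.smul_apply, smul_eq_mul]; ring
  | mul x y hx hy => simp only [Tval_mul, hx, hy]; ring

/-- `Tval` as a linear map in `v`. -/
noncomputable def Tlin (w : FreeGroup ι) : (ι → K) →ₗ[K] K where
  toFun v := Tval r w v
  map_add' := Tval_add r w
  map_smul' := Tval_smul r w

@[simp] lemma Tlin_apply (w : FreeGroup ι) (v : ι → K) : Tlin r w v = Tval r w v := rfl

lemma Tval_pow (v : ι → K) (w : FreeGroup ι) (n : ℕ) :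
    Tval r (w ^ n) v =
      (∑ t ∈ Finset.range n, ((FreeGroup.lift r w : Kˣ) : K) ^ t) * Tval r w v := by
  induction n with
  | zero => simp
  | succ n ih =>
      rw [pow_succ, Tval_mul, ih, Finset.sum_range_succ]
      push_cast [map_pow]
      ring

lemma Tval_listProd_zero (v : ι → K) (L : List (FreeGroup ι))
    (h : ∀ w ∈ L, Tval r w v = 0) : Tval r L.prod v = 0 := by
  induction L with
  | nil => simp
  | cons x L ih =>
      rw [List.prod_cons, Tval_mul, h x (by simp), ih (fun w hw => h w (by simp [hw]))]
      ring

lemma Tval_listProd_sum (v : ι → K) (L : List (FreeGroup ι))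
    (h : ∀ w ∈ L, FreeGroup.lift r w = 1) :
    Tval r L.prod v = (L.map (fun w => Tval r w v)).sum := by
  induction L with
  | nil => simp
  | cons x L ih =>
      rw [List.prod_cons, Tval_mul, h x (by simp), ih (fun w hw => h w (by simp [hw]))]
      simp

lemma Tval_comm (v : ι → K) (x y : FreeGroup ι) :
    Tval r ⁅x, y⁆ v =
      (1 - ((FreeGroup.lift r y : Kˣ) : K)) * Tval r x v +
        (((FreeGroup.lift r x : Kˣ) : K) - 1) * Tval r y v := by
  rw [commutatorElement_def]
  simp only [Tval_mul, Tval_inv, map_inv, map_mul, Units.val_inv_eq_inv_val, Units.val_mul]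
  field_simp
  ring

lemma lift_comm_eq_one (x y : FreeGroup ι) : FreeGroup.lift r ⁅x, y⁆ = 1 := by
  rw [map_commutatorElement]
  exact commutatorElement_eq_one_iff_mul_comm.mpr (mul_comm _ _)

lemma Tval_ofList_zero (v : ι → K) (L : List ι) (h : ∀ k ∈ L, v k = 0) :
    Tval r (L.map FreeGroup.of).prod v = 0 := by
  apply Tval_listProd_zero
  intro w hw
  rcases List.mem_map.mp hw with ⟨k, hk, rfl⟩
  simp [h k hk]

lemma Tval_ofList_single (v : ι → K) (L : List ι) (k₀ : ι)
    (hmem : k₀ ∈ L) (hnd : L.Nodup)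
    (h : ∀ k ∈ L, k ≠ k₀ → v k = 0) :
    ∃ u : Kˣ, Tval r (L.map FreeGroup.of).prod v = (u : K) * v k₀ := by
  induction L with
  | nil => simp at hmem
  | cons x L ih =>
      rw [List.map_cons, List.prod_cons, Tval_mul]
      rcases List.nodup_cons.mp hnd with ⟨hxL, hnd'⟩
      by_cases hx : x = k₀
      · subst hx
        have : Tval r (L.map FreeGroup.of).prod v = 0 := by
          apply Tval_ofList_zero
          intro k hk
          exact h k (by simp [hk]) (fun hkx => hxL (hkx ▸ hk))
        refine ⟨1, ?_⟩
        simp [this]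
      · have hv : v x = 0 := h x (by simp) hx
        have hmem' : k₀ ∈ L := by
          rcases List.mem_cons.mp hmem with h1 | h1
          · exact absurd h1.symm hx
          · exact h1
        rcases ih hmem' hnd' (fun k hk => h k (by simp [hk])) with ⟨u, hu⟩
        refine ⟨FreeGroup.lift r (FreeGroup.of x) * u, ?_⟩
        simp [hv, hu, Tval_of]
        ring

end Tval

section CharRepLemmas

variable {K : Type} [Field K] {G : Type} [Group G] (ρ : G →* Kˣ)

open groupCohomology

lemma charRep_apply (γ : G) (x : K) :
    (Rep.of (charRep ρ)).ρ γ x = (ρ γ : K) * x := by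
  simp [charRep, Rep.of_ρ]

lemma mem_oneCocycles_charRep (f : G → K) : f ∈ cocycles₁ (Rep.of (charRep ρ)) ↔
    ∀ g h : G, f (g * h) = (ρ g : K) * f h + f g := by
  rw [mem_cocycles₁_iff]
  exact Iff.rfl

lemma finrank_oneCoboundaries_charRep (hρ : ρ ≠ 1) :
    Module.finrank K
      (LinearMap.range (shortComplexH1 (Rep.of (charRep ρ))).moduleCatToCycles) = 1 := by
  set A := Rep.of (charRep ρ) with hA
  have hinj : Function.Injective (d₀₁ A).hom := by
    rw [← LinearMap.ker_eq_bot, d₀₁_ker_eq_invariants, Submodule.eq_bot_iff]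
    intro x hx
    by_contra hx0
    apply hρ
    ext γ
    have h1 : (ρ γ : K) * (show K from x) = (show K from x) := by
      have := hx γ
      rwa [charRep_apply] at this
    have hx0' : (show K from x) ≠ 0 := hx0
    have h2 : (ρ γ : K) = 1 :=
      mul_right_cancel₀ hx0' (h1.trans (one_mul (show K from x)).symm)
    exact (Units.val_eq_one.mp h2) ▸ rfl
  have hinj' : Function.Injective (shortComplexH1 A).moduleCatToCycles := by
    intro a b hab
    exact hinj (congrArg Subtype.val hab)
  have hfin := LinearMap.finrank_range_of_inj hinj'
  exact hfin.trans (Module.finrank_self K)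

end CharRepLemmas

namespace Stmt7Aux

open groupCohomology

variable {K : Type} [Field K] {g s : ℕ} {μ : Fin s → ℕ}

/-- The index type for the generators. -/
abbrev Idx (g s : ℕ) : Type := (Fin g ⊕ Fin g) ⊕ Fin s

/-- The surface relation word. -/
def surfWord (g s : ℕ) : FreeGroup (Idx g s) :=
  (List.ofFn fun i : Fin g =>
      ⁅FreeGroup.of (Sum.inl (Sum.inl i) : Idx g s),
        FreeGroup.of (Sum.inl (Sum.inr i) : Idx g s)⁆).prod *
    (List.ofFn fun j : Fin s => FreeGroup.of (Sum.inr j : Idx g s)).prod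

lemma surfWord_mem (μ : Fin s → ℕ) : surfWord g s ∈ surfRels g s μ :=
  Or.inr rfl

lemma gpow_mem (μ : Fin s → ℕ) (j : Fin s) :
    FreeGroup.of (Sum.inr j : Idx g s) ^ μ j ∈ surfRels g s μ :=
  Or.inl ⟨j, rfl⟩

variable (ρ : SurfOrbGroup g s μ →* Kˣ)

/-- Values of `ρ` on the generators. -/
def rr : Idx g s → Kˣ := fun k => ρ (PresentedGroup.of k)

lemma lift_rr (w : FreeGroup (Idx g s)) :
    FreeGroup.lift (rr ρ) w = ρ (PresentedGroup.mk (surfRels g s μ) w) :=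
  (FreeGroup.lift_unique (ρ.comp (PresentedGroup.mk (surfRels g s μ))) fun x => rfl).symm

lemma mk_rel_eq_one {rel : FreeGroup (Idx g s)} (h : rel ∈ surfRels g s μ) :
    PresentedGroup.mk (surfRels g s μ) rel = 1 :=
  (QuotientGroup.eq_one_iff rel).mpr (Subgroup.subset_normalClosure h)

lemma lift_rr_rel {rel : FreeGroup (Idx g s)} (h : rel ∈ surfRels g s μ) :
    FreeGroup.lift (rr ρ) rel = 1 := by
  rw [lift_rr, mk_rel_eq_one h, map_one]

/-- The coefficient of the relation `γ_j^{μ_j}`. -/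
def cc (j : Fin s) : K := ∑ t ∈ Finset.range (μ j), ((ρ (surfGamma g s μ j) : K)) ^ t

lemma Tval_gpow (v : Idx g s → K) (j : Fin s) :
    Tval (rr ρ) (FreeGroup.of (Sum.inr j : Idx g s) ^ μ j) v = cc ρ j * v (Sum.inr j) := by
  rw [Tval_pow, Tval_of, FreeGroup.lift_apply_of]
  rfl

lemma lam_pow (j : Fin s) : (ρ (surfGamma g s μ j)) ^ (μ j) = 1 := by
  have h1 : (surfGamma g s μ j) ^ (μ j) = 1 := by
    have := mk_rel_eq_one (μ := μ) (gpow_mem (g := g) μ j)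
    rwa [map_pow] at this
  rw [← map_pow, h1, map_one]

/-- The defining property of the "bad" indices. -/
def P (j : Fin s) : Prop := ρ (surfGamma g s μ j) = 1 ∧ ¬ (ringChar K ∣ μ j)

lemma cc_eq_zero_iff (j : Fin s) : cc ρ j = 0 ↔ ¬ P ρ j := by
  by_cases hlam : ρ (surfGamma g s μ j) = 1
  · have : cc ρ j = (μ j : K) := by
      simp [cc, hlam]
    rw [this, P]
    rw [ringChar.spec K (μ j)]
    simp [hlam]
  · have hlamv : ((ρ (surfGamma g s μ j) : K)) ≠ 1 := fun h => hlam (Units.ext h)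
    have hpow : ((ρ (surfGamma g s μ j) : K)) ^ (μ j) = 1 := by
      have := lam_pow ρ j
      calc ((ρ (surfGamma g s μ j) : K)) ^ (μ j)
          = (((ρ (surfGamma g s μ j)) ^ (μ j) : Kˣ) : K) := by push_cast; ring
        _ = 1 := by rw [this]; rfl
    have : cc ρ j = 0 := by
      rw [cc, geom_sum_eq hlamv, hpow, sub_self, zero_div]
    simp [this, P, hlam]

/-- The hypothesis that `v` satisfies all linearized relations. -/
def GoodV (v : Idx g s → K) : Prop := ∀ rel ∈ surfRels g s μ, Tval (rr ρ) rel v = 0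

/-- The homomorphism `Γ → Aff K` attached to relation-compatible values `v`. -/
noncomputable def mkPhi (v : Idx g s → K) (hv : GoodV ρ v) :
    SurfOrbGroup g s μ →* Aff K :=
  PresentedGroup.toGroup (f := fun k => ⟨v k, rr ρ k⟩) (by
    intro rel hrel
    apply Aff.ext'
    · exact hv rel hrel
    · show (Fhom (rr ρ) v rel).u = _
      rw [Fhom_u, lift_rr_rel ρ hrel]
      rfl)

lemma mkPhi_mk (v : Idx g s → K) (hv : GoodV ρ v) (w : FreeGroup (Idx g s)) :
    mkPhi ρ v hv (PresentedGroup.mk (surfRels g s μ) w) = Fhom (rr ρ) v w := rfl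

lemma mkPhi_of (v : Idx g s → K) (hv : GoodV ρ v) (k : Idx g s) :
    mkPhi ρ v hv (PresentedGroup.of k) = ⟨v k, rr ρ k⟩ := by
  show mkPhi ρ v hv (PresentedGroup.mk (surfRels g s μ) (FreeGroup.of k)) = _
  rw [mkPhi_mk, Fhom_of]

lemma mkPhi_u (v : Idx g s → K) (hv : GoodV ρ v) (γ : SurfOrbGroup g s μ) :
    (mkPhi ρ v hv γ).u = ρ γ := by
  have h : Aff.sndHom.comp (mkPhi ρ v hv) = ρ := by
    apply PresentedGroup.ext
    intro x
    rw [MonoidHom.comp_apply, mkPhi_of]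
    rfl
  exact DFunLike.congr_fun h γ

/-- The cocycle attached to relation-compatible values `v`. -/
noncomputable def cocycOf (v : Idx g s → K) (hv : GoodV ρ v) :
    cocycles₁ (Rep.of (charRep ρ)) :=
  ⟨fun γ => (mkPhi ρ v hv γ).a, by
    rw [mem_oneCocycles_charRep]
    intro a b
    rw [map_mul, Aff.mul_a, mkPhi_u]
    ring⟩

lemma cocycOf_apply (v : Idx g s → K) (hv : GoodV ρ v) (γ : SurfOrbGroup g s μ) :
    (cocycOf ρ v hv : SurfOrbGroup g s μ → K) γ = (mkPhi ρ v hv γ).a := rfl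

lemma cocycOf_of (v : Idx g s → K) (hv : GoodV ρ v) (k : Idx g s) :
    (cocycOf ρ v hv : SurfOrbGroup g s μ → K) (PresentedGroup.of k) = v k := by
  rw [cocycOf_apply, mkPhi_of]

/-- A cocycle vanishing on all generators vanishes. -/
lemma cocycle_vanish (f : cocycles₁ (Rep.of (charRep ρ)))
    (h : ∀ k : Idx g s, (f : SurfOrbGroup g s μ → K) (PresentedGroup.of k) = 0)
    (γ : SurfOrbGroup g s μ) : (f : SurfOrbGroup g s μ → K) γ = 0 := by
  set F : SurfOrbGroup g s μ → K := fun γ => (f : SurfOrbGroup g s μ → K) γ with hF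
  have hcoc : ∀ a b : SurfOrbGroup g s μ, F (a * b) = (ρ a : K) * F b + F a :=
    (mem_oneCocycles_charRep ρ F).1 f.2
  have hinv : ∀ a : SurfOrbGroup g s μ, (ρ a : K) * F a⁻¹ = - F a :=
    fun a => cocycles₁_map_inv f a
  let H : Subgroup (SurfOrbGroup g s μ) :=
    { carrier := {γ | F γ = 0}
      one_mem' := cocycles₁_map_one f
      mul_mem' := by
        intro a b ha hb
        simp only [Set.mem_setOf_eq] at ha hb ⊢
        rw [hcoc, ha, hb, mul_zero, add_zero]
      inv_mem' := by
        intro a ha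
        simp only [Set.mem_setOf_eq] at ha ⊢
        have h1 := hinv a
        rw [ha, neg_zero] at h1
        rcases mul_eq_zero.mp h1 with h2 | h2
        · exact absurd h2 (Units.ne_zero _)
        · exact h2 }
  exact PresentedGroup.generated_by (surfRels g s μ) H h γ

/-- A cocycle evaluated along a word equals `Tval` of its generator values. -/
lemma Tval_restrict (f : cocycles₁ (Rep.of (charRep ρ))) (w : FreeGroup (Idx g s)) :
    Tval (rr ρ) w (fun k => (f : SurfOrbGroup g s μ → K) (PresentedGroup.of k)) =
      (f : SurfOrbGroup g s μ → K) (PresentedGroup.mk (surfRels g s μ) w) := by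
  set F : SurfOrbGroup g s μ → K := fun γ => (f : SurfOrbGroup g s μ → K) γ with hF
  have hcoc : ∀ a b : SurfOrbGroup g s μ, F (a * b) = (ρ a : K) * F b + F a :=
    (mem_oneCocycles_charRep ρ F).1 f.2
  have hinv : ∀ a : SurfOrbGroup g s μ, (ρ a : K) * F a⁻¹ = - F a :=
    fun a => cocycles₁_map_inv f a
  induction w using FreeGroup.induction_on with
  | C1 => rw [Tval_one, map_one]; exact (cocycles₁_map_one f).symm
  | of k =>
      rw [Tval_of]
      rfl
  | inv_of k _ =>
      rw [Tval_inv, Tval_of, map_inv, FreeGroup.lift_apply_of]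
      show -((((rr ρ k)⁻¹ : Kˣ) : K) * F (PresentedGroup.of k)) = F (PresentedGroup.of k)⁻¹
      have hne : ((ρ (PresentedGroup.of k : SurfOrbGroup g s μ) : K)) ≠ 0 := Units.ne_zero _
      have h2 : (((rr ρ k)⁻¹ : Kˣ) : K) =
          ((ρ (PresentedGroup.of k : SurfOrbGroup g s μ) : K))⁻¹ := by
        rw [Units.val_inv_eq_inv_val]; rfl
      have h1 := hinv (PresentedGroup.of k : SurfOrbGroup g s μ)
      rw [h2]
      apply mul_left_cancel₀ hne
      rw [h1, mul_neg, ← mul_assoc, mul_inv_cancel₀ hne, one_mul]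
  | mul x y hx hy =>
      rw [Tval_mul, map_mul, hx, hy, lift_rr]
      exact (add_comm _ _).trans (hcoc _ _).symm

/-! ### The subspace of admissible generator values -/

section Vanish

variable {K' : Type} [Field K'] {ι : Type} (q : ι → Prop)

/-- Functions vanishing on `q`. -/
def vanishSub : Submodule K' (ι → K') where
  carrier := {v | ∀ k, q k → v k = 0}
  add_mem' := fun ha hb k hk => by
    simp only [Pi.add_apply, ha k hk, hb k hk, add_zero]
  zero_mem' := fun k _ => rfl
  smul_mem' := fun c v hv k hk => by
    simp only [Pi.smul_apply, hv k hk, smul_eq_mul, mul_zero]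

/-- Restriction to the complement of `q` as a linear equivalence. -/
noncomputable def vanishEquiv [DecidablePred q] :
    (vanishSub (K' := K') q) ≃ₗ[K'] ({k : ι // ¬ q k} → K') where
  toFun x := fun k => x.1 k.1
  map_add' _ _ := rfl
  map_smul' _ _ := rfl
  invFun w := ⟨fun k => if h : q k then 0 else w ⟨k, h⟩, fun k hk => dif_pos hk⟩
  left_inv x := by
    apply Subtype.ext
    funext k
    by_cases h : q k
    · simp [h, x.2 k h]
    · simp [h]
  right_inv w := by
    funext k
    simp [k.2]

lemma finrank_vanishSub [DecidablePred q] [Fintype ι] [Fintype {k : ι // ¬ q k}] :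
    Module.finrank K' (vanishSub (K' := K') q) = Fintype.card {k : ι // ¬ q k} := by
  rw [(vanishEquiv q).finrank_eq, Module.finrank_pi]

end Vanish

/-- Indices `k` at which admissible vectors must vanish. -/
def bad : Idx g s → Prop := Sum.elim (fun _ => False) (P ρ)

/-- The subspace of vectors vanishing at the bad indices. -/
def Wsub : Submodule K (Idx g s → K) := vanishSub (bad ρ)

lemma mem_Wsub {v : Idx g s → K} : v ∈ Wsub ρ ↔ ∀ j, P ρ j → v (Sum.inr j) = 0 := by
  constructor
  · intro h j hj
    exact h (Sum.inr j) hj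
  · intro h k hk
    rcases k with k | j
    · exact absurd hk (by simp [bad])
    · exact h j hk

/-- The surface-relation functional restricted to `Wsub`. -/
noncomputable def phiW : (Wsub ρ) →ₗ[K] K :=
  (Tlin (rr ρ) (surfWord g s)).domRestrict (Wsub ρ)

lemma goodV_of_mem {v : Idx g s → K} (hW : v ∈ Wsub ρ)
    (hT : Tval (rr ρ) (surfWord g s) v = 0) : GoodV ρ v := by
  intro rel hrel
  rcases hrel with ⟨j, rfl⟩ | hrel
  · rw [Tval_gpow]
    by_cases hj : P ρ j
    · rw [(mem_Wsub ρ).1 hW j hj, mul_zero]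
    · rw [(cc_eq_zero_iff ρ j).mpr hj, zero_mul]
  · rw [Set.mem_singleton_iff] at hrel
    subst hrel
    exact hT

lemma restrict_mem_Wsub (f : cocycles₁ (Rep.of (charRep ρ))) :
    (fun k => (f : SurfOrbGroup g s μ → K) (PresentedGroup.of k)) ∈ Wsub ρ := by
  rw [mem_Wsub]
  intro j hj
  have h1 := Tval_restrict ρ f (FreeGroup.of (Sum.inr j : Idx g s) ^ μ j)
  rw [Tval_gpow, mk_rel_eq_one (gpow_mem (g := g) μ j)] at h1
  have h2 : (f : SurfOrbGroup g s μ → K) (1 : SurfOrbGroup g s μ) = 0 :=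
    cocycles₁_map_one f
  rw [h2] at h1
  rcases mul_eq_zero.mp h1 with h3 | h3
  · exact absurd ((cc_eq_zero_iff ρ j).1 h3) (not_not.mpr hj)
  · exact h3

lemma restrict_Tval_surf (f : cocycles₁ (Rep.of (charRep ρ))) :
    Tval (rr ρ) (surfWord g s)
      (fun k => (f : SurfOrbGroup g s μ → K) (PresentedGroup.of k)) = 0 := by
  have h1 := Tval_restrict ρ f (surfWord g s)
  rw [mk_rel_eq_one (surfWord_mem (g := g) μ)] at h1
  rw [h1]
  exact cocycles₁_map_one f

/-- The linear equivalence between the kernel of the restricted surface functional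
and the space of 1-cocycles. -/
noncomputable def cocycEquiv :
    (LinearMap.ker (phiW ρ)) ≃ₗ[K] cocycles₁ (Rep.of (charRep ρ)) where
  toFun x := cocycOf ρ x.1.1 (goodV_of_mem ρ x.1.2 x.2)
  map_add' x y := by
    apply Subtype.ext
    funext γ
    induction γ using PresentedGroup.induction_on with
    | H w =>
      show (mkPhi ρ _ _ (PresentedGroup.mk _ w)).a =
        (mkPhi ρ _ _ (PresentedGroup.mk _ w)).a + (mkPhi ρ _ _ (PresentedGroup.mk _ w)).a
      simp only [mkPhi_mk]
      exact Tval_add (rr ρ) w x.1.1 y.1.1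
  map_smul' c x := by
    apply Subtype.ext
    funext γ
    induction γ using PresentedGroup.induction_on with
    | H w =>
      show (mkPhi ρ _ _ (PresentedGroup.mk _ w)).a = c * (mkPhi ρ _ _ (PresentedGroup.mk _ w)).a
      simp only [mkPhi_mk]
      exact Tval_smul (rr ρ) w c x.1.1
  invFun f := ⟨⟨fun k => (f : SurfOrbGroup g s μ → K) (PresentedGroup.of k),
      restrict_mem_Wsub ρ f⟩, by
    rw [LinearMap.mem_ker]
    exact restrict_Tval_surf ρ f⟩
  left_inv x := by
    apply Subtype.ext
    apply Subtype.ext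
    funext k
    exact cocycOf_of ρ x.1.1 (goodV_of_mem ρ x.1.2 x.2) k
  right_inv f := by
    set vf : Idx g s → K := fun k => (f : SurfOrbGroup g s μ → K) (PresentedGroup.of k) with hvf
    set c0 : cocycles₁ (Rep.of (charRep ρ)) :=
      cocycOf ρ vf (goodV_of_mem ρ (restrict_mem_Wsub ρ f) (restrict_Tval_surf ρ f)) with hc0
    have hd : ∀ k : Idx g s,
        ((f - c0 : cocycles₁ (Rep.of (charRep ρ))) : SurfOrbGroup g s μ → K)
          (PresentedGroup.of k) = 0 := by
      intro k
      show (f : SurfOrbGroup g s μ → K) (PresentedGroup.of k) -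
        (c0 : SurfOrbGroup g s μ → K) (PresentedGroup.of k) = 0
      rw [hc0, cocycOf_of, sub_self]
    apply Subtype.ext
    funext γ
    have h3 : (f : SurfOrbGroup g s μ → K) γ - (c0 : SurfOrbGroup g s μ → K) γ = 0 :=
      cocycle_vanish ρ (f - c0) hd γ
    show (c0 : SurfOrbGroup g s μ → K) γ = (f : SurfOrbGroup g s μ → K) γ
    exact (sub_eq_zero.mp h3).symm

/-! ### Nonvanishing of the surface functional on `Wsub` -/

/-- The commutator part of the surface word. -/
def Cword (g s : ℕ) : FreeGroup (Idx g s) :=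
  (List.ofFn fun i : Fin g =>
      ⁅FreeGroup.of (Sum.inl (Sum.inl i) : Idx g s),
        FreeGroup.of (Sum.inl (Sum.inr i) : Idx g s)⁆).prod

/-- The marked-points part of the surface word. -/
def Gword (g s : ℕ) : FreeGroup (Idx g s) :=
  (List.ofFn fun j : Fin s => FreeGroup.of (Sum.inr j : Idx g s)).prod

lemma Gword_map : Gword g s =
    ((List.ofFn fun j : Fin s => (Sum.inr j : Idx g s)).map FreeGroup.of).prod := by
  rw [List.map_ofFn]
  rfl

lemma lift_Cword : FreeGroup.lift (rr ρ) (Cword g s) = 1 := by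
  rw [Cword, map_list_prod]
  apply List.prod_eq_one
  intro x hx
  rcases List.mem_map.mp hx with ⟨w, hw, rfl⟩
  rcases List.mem_ofFn.mp hw with ⟨i, rfl⟩
  exact lift_comm_eq_one (rr ρ) _ _

lemma Tval_surfWord (v : Idx g s → K) :
    Tval (rr ρ) (surfWord g s) v = Tval (rr ρ) (Cword g s) v + Tval (rr ρ) (Gword g s) v := by
  have h : surfWord g s = Cword g s * Gword g s := rfl
  rw [h, Tval_mul, lift_Cword]
  norm_num

lemma exists_good_nonzero (hρ : ρ ≠ 1) :
    ∃ v, v ∈ Wsub ρ ∧ Tval (rr ρ) (surfWord g s) v ≠ 0 := by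
  classical
  by_cases hall : ∀ j : Fin s, P ρ j
  · -- all marked points are "bad"; use that `ρ` is nontrivial on the surface generators
    have hex : ∃ k : Idx g s, rr ρ k ≠ 1 := by
      by_contra h
      push_neg at h
      exact hρ (PresentedGroup.ext fun x => (h x).trans rfl)
    obtain ⟨k₀, hk₀⟩ := hex
    rcases k₀ with (i | i) | j
    · -- `ρ(x_i) ≠ 1`; take the indicator of `y_i`
      set v : Idx g s → K := fun k => if k = Sum.inl (Sum.inr i) then 1 else 0 with hv
      have hW : v ∈ Wsub ρ := by
        rw [mem_Wsub]
        intro j _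
        simp [hv]
      have hG : Tval (rr ρ) (Gword g s) v = 0 := by
        rw [Gword_map]
        apply Tval_ofList_zero
        intro k hk
        rcases List.mem_ofFn.mp hk with ⟨j, rfl⟩
        simp [hv]
      have hC : Tval (rr ρ) (Cword g s) v = ((rr ρ (Sum.inl (Sum.inl i)) : K) - 1) := by
        rw [Cword, Tval_listProd_sum _ v _ (by
          intro w hw
          rcases List.mem_ofFn.mp hw with ⟨i', rfl⟩
          exact lift_comm_eq_one (rr ρ) _ _), List.map_ofFn, List.sum_ofFn]
        rw [Finset.sum_eq_single i]
        · simp only [Function.comp_apply, Tval_comm, Tval_of, FreeGroup.lift_apply_of]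
          simp [hv]
        · intro b _ hb
          simp only [Function.comp_apply, Tval_comm, Tval_of, FreeGroup.lift_apply_of]
          simp [hv, hb]
        · intro hi
          exact absurd (Finset.mem_univ i) hi
      refine ⟨v, hW, ?_⟩
      rw [Tval_surfWord, hC, hG, add_zero]
      exact sub_ne_zero.mpr (fun h => hk₀ (Units.ext h))
    · -- `ρ(y_i) ≠ 1`; take the indicator of `x_i`
      set v : Idx g s → K := fun k => if k = Sum.inl (Sum.inl i) then 1 else 0 with hv
      have hW : v ∈ Wsub ρ := by
        rw [mem_Wsub]
        intro j _
        simp [hv]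
      have hG : Tval (rr ρ) (Gword g s) v = 0 := by
        rw [Gword_map]
        apply Tval_ofList_zero
        intro k hk
        rcases List.mem_ofFn.mp hk with ⟨j, rfl⟩
        simp [hv]
      have hC : Tval (rr ρ) (Cword g s) v = (1 - (rr ρ (Sum.inl (Sum.inr i)) : K)) := by
        rw [Cword, Tval_listProd_sum _ v _ (by
          intro w hw
          rcases List.mem_ofFn.mp hw with ⟨i', rfl⟩
          exact lift_comm_eq_one (rr ρ) _ _), List.map_ofFn, List.sum_ofFn]
        rw [Finset.sum_eq_single i]
        · simp only [Function.comp_apply, Tval_comm, Tval_of, FreeGroup.lift_apply_of]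
          simp [hv]
        · intro b _ hb
          simp only [Function.comp_apply, Tval_comm, Tval_of, FreeGroup.lift_apply_of]
          simp [hv, hb]
        · intro hi
          exact absurd (Finset.mem_univ i) hi
      refine ⟨v, hW, ?_⟩
      rw [Tval_surfWord, hC, hG, add_zero]
      exact sub_ne_zero.mpr (fun h => hk₀ (Units.ext h.symm))
    · exact absurd (hall j).1 hk₀
  · -- some marked point is "good"; take its indicator
    push_neg at hall
    obtain ⟨j₀, hj₀⟩ := hall
    set v : Idx g s → K := fun k => if k = Sum.inr j₀ then 1 else 0 with hv
    have hW : v ∈ Wsub ρ := by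
      rw [mem_Wsub]
      intro j hj
      have : j ≠ j₀ := fun h => hj₀ (h ▸ hj)
      simp [hv, this]
    have hC : Tval (rr ρ) (Cword g s) v = 0 := by
      rw [Cword]
      apply Tval_listProd_zero
      intro w hw
      rcases List.mem_ofFn.mp hw with ⟨i, rfl⟩
      rw [Tval_comm]
      simp [hv]
    have hG : Tval (rr ρ) (Gword g s) v ≠ 0 := by
      rw [Gword_map]
      obtain ⟨u, hu⟩ := Tval_ofList_single (rr ρ) v _ (Sum.inr j₀)
        (List.mem_ofFn.mpr ⟨j₀, rfl⟩)
        (List.nodup_ofFn.mpr fun a b h => Sum.inr_injective h)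
        (fun k _ hk => by simp [hv, hk])
      rw [hu]
      simp [hv]
    refine ⟨v, hW, ?_⟩
    rw [Tval_surfWord, hC, zero_add]
    exact hG

/-! ### Dimension count -/

lemma finrank_ker_phiW (hρ : ρ ≠ 1) :
    Module.finrank K (LinearMap.ker (phiW ρ)) + 1 = Module.finrank K (Wsub ρ) := by
  have hr := LinearMap.finrank_range_add_finrank_ker (phiW ρ)
  have hrange : LinearMap.range (phiW ρ) = ⊤ := by
    obtain ⟨v, hvW, hvne⟩ := exists_good_nonzero ρ hρ
    rw [LinearMap.range_eq_top]
    intro c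
    refine ⟨(c * (Tval (rr ρ) (surfWord g s) v)⁻¹) • ⟨v, hvW⟩, ?_⟩
    rw [map_smul]
    have h0 : phiW ρ ⟨v, hvW⟩ = Tval (rr ρ) (surfWord g s) v := rfl
    rw [h0, smul_eq_mul]
    field_simp
  rw [hrange, finrank_top, Module.finrank_self] at hr
  omega

lemma finrank_Wsub :
    Module.finrank K (Wsub ρ) + Nat.card {j : Fin s // P ρ j} = 2 * g + s := by
  classical
  have h1 : Module.finrank K (Wsub ρ) = Fintype.card {k : Idx g s // ¬ bad ρ k} :=
    finrank_vanishSub (bad ρ)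
  have e : {j : Fin s // P ρ j} ≃ {k : Idx g s // bad ρ k} := by
    refine Equiv.ofBijective (fun j => ⟨Sum.inr j.1, j.2⟩) ⟨?_, ?_⟩
    · intro a b hab
      apply Subtype.ext
      exact Sum.inr_injective (congrArg Subtype.val hab)
    · rintro ⟨(k | j), hk⟩
      · exact absurd hk (by simp [bad])
      · exact ⟨⟨j, hk⟩, rfl⟩
  have h3 : Fintype.card {k : Idx g s // bad ρ k} = Fintype.card {j : Fin s // P ρ j} :=
    (Fintype.card_congr e).symm
  have h2 : Fintype.card {k : Idx g s // ¬ bad ρ k} =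
      Fintype.card (Idx g s) - Fintype.card {k : Idx g s // bad ρ k} :=
    Fintype.card_subtype_compl _
  have h4 : Fintype.card (Idx g s) = 2 * g + s := by
    simp only [Fintype.card_sum, Fintype.card_fin]
    omega
  have h5 : Fintype.card {k : Idx g s // bad ρ k} ≤ Fintype.card (Idx g s) :=
    Fintype.card_subtype_le _
  have h6 : Nat.card {j : Fin s // P ρ j} = Fintype.card {j : Fin s // P ρ j} :=
    Nat.card_eq_fintype_card
  omega

end Stmt7Aux


/-- let `K` be an algebraically closed field of characteristic `p ≥ 0`,
`g ≥ 1`, `s ≥ 0`, `μ_j ≥ 2`, `Γ` the compact-surface orbifold group above, and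
`ρ : Γ → Kˣ` a nontrivial character.  With `ℓ = #{j | ρ(γ_j) = 1 and p ∤ μ_j}`, one
has `dim_K H¹(Γ, K_ρ) = 2g + s - 2 - ℓ`. -/
theorem stmt7 (K : Type) [Field K] [IsAlgClosed K] (g s : ℕ) (hg : 1 ≤ g)
    (μ : Fin s → ℕ) (hμ : ∀ j, 2 ≤ μ j)
    (ρ : SurfOrbGroup g s μ →* Kˣ) (hρ : ρ ≠ 1) :
    Module.finrank K (groupCohomology.H1 (Rep.of (charRep ρ))) =
      2 * g + s - 2 -
        Nat.card {j : Fin s // ρ (surfGamma g s μ j) = 1 ∧ ¬ (ringChar K ∣ μ j)} := by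
  classical
  open groupCohomology Stmt7Aux in
  have hcard : Nat.card {j : Fin s // ρ (surfGamma g s μ j) = 1 ∧ ¬ (ringChar K ∣ μ j)} =
      Nat.card {j : Fin s // Stmt7Aux.P ρ j} := rfl
  rw [hcard]
  haveI hk : FiniteDimensional K (LinearMap.ker (Stmt7Aux.phiW ρ)) := by infer_instance
  haveI hfd : FiniteDimensional K
      (groupCohomology.cocycles₁ (Rep.of (charRep ρ))) :=
    Module.Finite.equiv (Stmt7Aux.cocycEquiv ρ)
  have hZ : Module.finrank K (groupCohomology.cocycles₁ (Rep.of (charRep ρ))) =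
      Module.finrank K (LinearMap.ker (Stmt7Aux.phiW ρ)) :=
    (Stmt7Aux.cocycEquiv ρ).symm.finrank_eq
  have hq : Module.finrank K (groupCohomology.cocycles₁ (Rep.of (charRep ρ)) ⧸
        LinearMap.range (groupCohomology.shortComplexH1 (Rep.of (charRep ρ))).moduleCatToCycles) +
      Module.finrank K
        (LinearMap.range (groupCohomology.shortComplexH1 (Rep.of (charRep ρ))).moduleCatToCycles) =
      Module.finrank K (groupCohomology.cocycles₁ (Rep.of (charRep ρ))) :=
    by
      haveI : Module.Finite K
          (LinearMap.ker (groupCohomology.shortComplexH1 (Rep.of (charRep ρ))).g.hom) := hfd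
      exact @Submodule.finrank_quotient_add_finrank _ _ _ _ _ _ _ hfd _
  have hB := finrank_oneCoboundaries_charRep ρ hρ
  have hker := Stmt7Aux.finrank_ker_phiW ρ hρ
  have hW := Stmt7Aux.finrank_Wsub ρ
  have hl : Nat.card {j : Fin s // Stmt7Aux.P ρ j} ≤ s := by
    rw [Nat.card_eq_fintype_card]
    exact (Fintype.card_subtype_le _).trans (by simp)
  rw [(groupCohomology.H1Iso (Rep.of (charRep ρ))).toLinearEquiv.finrank_eq]
  show Module.finrank K
      (groupCohomology.cocycles₁ (Rep.of (charRep ρ)) ⧸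
        LinearMap.range (groupCohomology.shortComplexH1 (Rep.of (charRep ρ))).moduleCatToCycles) = _
  omega
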